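/- arXiv:2305.07858 — 2 statements merged into one kernel-verified Lean document; each statement's English description precedes it below -/
import Mathlib

section
/- For every integer n ≥ 2, the sum over all compositions (c_1, …, c_k) of n all of whose parts satisfy c_i ≥ 2 of the product c_1·(c_2 − 1)(c_3 − 1)⋯(c_k − 1) equals 2 if n = 2, and equals 3·2^{n−3} if n ≥ 3. -/
noncomputable def LL (n : ℕ) : Finset (List ℕ) :=
  Finset.image Composition.blocks
    ((Finset.univ : Finset (Composition n)).filter fun c => ∀ i ∈ c.blocks, 2 ≤ i)

lemma mem_LL {n : ℕ} {l : List ℕ} : l ∈ LL n ↔ l.sum = n ∧ ∀ i ∈ l, 2 ≤ i := by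
  constructor
  · rintro h
    simp only [LL, Finset.mem_image, Finset.mem_filter] at h
    obtain ⟨c, ⟨-, h2⟩, rfl⟩ := h
    exact ⟨c.blocks_sum, h2⟩
  · rintro ⟨h1, h2⟩
    simp only [LL, Finset.mem_image, Finset.mem_filter]
    exact ⟨⟨l, fun {i} hi => by have := h2 i hi; omega, h1⟩, ⟨Finset.mem_univ _, h2⟩, rfl⟩

lemma sum_LL_eq (n : ℕ) (hn : 1 ≤ n) (f : List ℕ → ℕ) :
    ∑ l ∈ LL n, f l = ∑ m ∈ Finset.Icc 2 n, ∑ l ∈ LL (n - m), f (m :: l) := by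
  rw [Finset.sum_sigma']
  refine Finset.sum_nbij' (fun l => (⟨l.headI, l.tail⟩ : (_ : ℕ) × List ℕ))
    (fun p : (_ : ℕ) × List ℕ => p.1 :: p.2) ?_ ?_ ?_ ?_ ?_
  · rintro l hl
    rw [mem_LL] at hl
    obtain ⟨h1, h2⟩ := hl
    obtain _ | ⟨a, t⟩ := l
    · simp at h1; omega
    · have ha : 2 ≤ a := h2 a (by simp)
      have hs : a + t.sum = n := by simpa using h1
      simp only [Finset.mem_sigma, Finset.mem_Icc, List.headI_cons, List.tail_cons]
      refine ⟨⟨ha, by omega⟩, mem_LL.2 ⟨by omega, fun i hi => h2 i (by simp [hi])⟩⟩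
  · rintro ⟨m, l⟩ hp
    simp only [Finset.mem_sigma, Finset.mem_Icc] at hp
    obtain ⟨⟨hm2, hmn⟩, hl⟩ := hp
    rw [mem_LL] at hl ⊢
    obtain ⟨h1, h2⟩ := hl
    refine ⟨by simp [h1]; omega, ?_⟩
    intro i hi
    rcases List.mem_cons.1 hi with rfl | hi
    · exact hm2
    · exact h2 i hi
  · rintro l hl
    rw [mem_LL] at hl
    obtain ⟨h1, h2⟩ := hl
    obtain _ | ⟨a, t⟩ := l
    · simp at h1; omega
    · rfl
  · rintro ⟨m, l⟩ hp
    rfl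
  · rintro l hl
    rw [mem_LL] at hl
    obtain ⟨h1, h2⟩ := hl
    obtain _ | ⟨a, t⟩ := l
    · simp at h1; omega
    · rfl

noncomputable def GG (n : ℕ) : ℕ := ∑ l ∈ LL n, (l.map (fun i => i - 1)).prod

lemma LL_zero : LL 0 = {[]} := by
  ext l
  rw [mem_LL]
  constructor
  · rintro ⟨h1, h2⟩
    obtain _ | ⟨a, t⟩ := l
    · simp
    · have := h2 a (by simp)
      simp at h1
      omega
  · rintro h
    simp at h
    subst h
    simp

lemma GG_zero : GG 0 = 1 := by simp [GG, LL_zero]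

lemma GG_one : GG 1 = 0 := by
  have : LL 1 = ∅ := by
    ext l
    rw [mem_LL]
    simp only [Finset.notMem_empty, iff_false, not_and]
    intro h1 h2
    obtain _ | ⟨a, t⟩ := l
    · simp at h1
    · have := h2 a (by simp)
      have : a + t.sum = 1 := by simpa using h1
      omega
  simp [GG, this]

lemma GG_rec (n : ℕ) (hn : 1 ≤ n) :
    GG n = ∑ m ∈ Finset.Icc 2 n, (m - 1) * GG (n - m) := by
  rw [GG, sum_LL_eq n hn]
  refine Finset.sum_congr rfl fun m _ => ?_
  rw [GG, Finset.mul_sum]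
  refine Finset.sum_congr rfl fun l _ => ?_
  simp

lemma aux_sum (k : ℕ) :
    (∑ j ∈ Finset.range (k + 1), (j + 1) * 2 ^ (k - j)) + k + 3 = 2 ^ (k + 2) := by
  induction k with
  | zero => simp
  | succ k ih =>
    rw [Finset.sum_range_succ]
    have h : ∀ j ∈ Finset.range (k + 1), (j + 1) * 2 ^ (k + 1 - j) = 2 * ((j + 1) * 2 ^ (k - j)) := by
      intro j hj
      rw [Finset.mem_range] at hj
      have : k + 1 - j = (k - j) + 1 := by omega
      rw [this]
      ring
    rw [Finset.sum_congr rfl h, ← Finset.mul_sum]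
    simp only [Nat.sub_self, pow_zero, mul_one]
    have h2 : (2:ℕ)^(k+1+2) = 2 * 2^(k+2) := by ring
    omega

lemma GG_closed (n : ℕ) : GG (n + 2) = 2 ^ n := by
  induction n using Nat.strong_induction_on with
  | _ n ih =>
    rw [GG_rec (n + 2) (by omega), ← Finset.Ico_add_one_right_eq_Icc, Finset.sum_Ico_eq_sum_range]
    have hr : n + 2 + 1 - 2 = n + 1 := by omega
    rw [hr]
    have hterm : ∀ j ∈ Finset.range (n + 1), (2 + j - 1) * GG (n + 2 - (2 + j))
        = (j + 1) * GG (n - j) := by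
      intro j hj
      congr 1
      · omega
      · congr 1; omega
    rw [Finset.sum_congr rfl hterm]
    match n, ih with
    | 0, _ => simp [GG_zero]
    | 1, _ => simp [Finset.sum_range_succ, GG_zero, GG_one]
    | (k+2), ih =>
      rw [Finset.sum_range_succ, Finset.sum_range_succ]
      have h1 : k + 2 - (k + 1) = 1 := by omega
      have h2 : k + 2 - (k + 2) = 0 := by omega
      rw [h1, h2, GG_zero, GG_one]
      have hterm2 : ∀ j ∈ Finset.range (k + 1), (j + 1) * GG (k + 2 - j)
          = (j + 1) * 2 ^ (k - j) := by
        intro j hj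
        rw [Finset.mem_range] at hj
        have : k + 2 - j = (k - j) + 2 := by omega
        rw [this, ih (k - j) (by omega)]
      rw [Finset.sum_congr rfl hterm2]
      have := aux_sum k
      omega

noncomputable def FF (n : ℕ) : ℕ :=
  ∑ l ∈ LL n, l.headI * ((l.tail).map (fun i => i - 1)).prod

lemma FF_rec (n : ℕ) (hn : 1 ≤ n) :
    FF n = ∑ m ∈ Finset.Icc 2 n, m * GG (n - m) := by
  rw [FF, sum_LL_eq n hn]
  refine Finset.sum_congr rfl fun m _ => ?_
  rw [GG, Finset.mul_sum]
  simp

lemma FF_two : FF 2 = 2 := by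
  rw [FF_rec 2 (by omega)]
  simp [GG_zero]

lemma aux_sum2 (k : ℕ) :
    (∑ j ∈ Finset.range k, (j + 2) * 2 ^ (k - 1 - j)) + k + 3 = 3 * 2 ^ k := by
  induction k with
  | zero => simp
  | succ k ih =>
    rw [Finset.sum_range_succ]
    have h : ∀ j ∈ Finset.range k, (j + 2) * 2 ^ (k + 1 - 1 - j)
        = 2 * ((j + 2) * 2 ^ (k - 1 - j)) := by
      intro j hj
      rw [Finset.mem_range] at hj
      have : k + 1 - 1 - j = (k - 1 - j) + 1 := by omega
      rw [this]
      ring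
    rw [Finset.sum_congr rfl h, ← Finset.mul_sum]
    have h2 : (3:ℕ) * 2 ^ (k+1) = 2 * (3 * 2 ^ k) := by ring
    have h3 : k + 1 - 1 - k = 0 := by omega
    rw [h3]
    simp only [pow_zero, mul_one]
    omega

lemma FF_closed (k : ℕ) : FF (k + 3) = 3 * 2 ^ k := by
  rw [FF_rec (k + 3) (by omega), ← Finset.Ico_add_one_right_eq_Icc, Finset.sum_Ico_eq_sum_range]
  have hr : k + 3 + 1 - 2 = k + 2 := by omega
  rw [hr]
  have hterm : ∀ j ∈ Finset.range (k + 2), (2 + j) * GG (k + 3 - (2 + j))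
      = (j + 2) * GG (k + 1 - j) := by
    intro j hj
    congr 1
    · omega
    · congr 1; omega
  rw [Finset.sum_congr rfl hterm, Finset.sum_range_succ, Finset.sum_range_succ]
  have h1 : k + 1 - k = 1 := by omega
  have h2 : k + 1 - (k + 1) = 0 := by omega
  rw [h1, h2, GG_zero, GG_one]
  have hterm2 : ∀ j ∈ Finset.range k, (j + 2) * GG (k + 1 - j)
      = (j + 2) * 2 ^ (k - 1 - j) := by
    intro j hj
    rw [Finset.mem_range] at hj
    have : k + 1 - j = (k - 1 - j) + 2 := by omega
    rw [this, GG_closed]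
  rw [Finset.sum_congr rfl hterm2]
  have := aux_sum2 k
  omega

/-- For every integer `n ≥ 2`, the sum over all compositions `(c₁, …, c_k)` of `n` all of whose
parts are at least `2` of the product `c₁ · (c₂ − 1) ⋯ (c_k − 1)` equals `2` if `n = 2`
and `3 · 2^(n−3)` if `n ≥ 3`. -/
theorem composition_parts_ge_two_first_part_prod (n : ℕ) (hn : 2 ≤ n) :
    ∑ c ∈ Finset.univ.filter (fun c : Composition n => ∀ i ∈ c.blocks, 2 ≤ i),
      c.blocks.headI * ((c.blocks.tail).map (fun i => i - 1)).prod
      = if n = 2 then 2 else 3 * 2 ^ (n - 3) := by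
  have key : ∑ c ∈ Finset.univ.filter (fun c : Composition n => ∀ i ∈ c.blocks, 2 ≤ i),
      c.blocks.headI * ((c.blocks.tail).map (fun i => i - 1)).prod = FF n := by
    rw [FF, LL, Finset.sum_image]
    intro x _ y _ h
    exact Composition.ext h
  rw [key]
  rcases eq_or_lt_of_le hn with h | h
  · rw [← h]
    simp [FF_two]
  · obtain ⟨k, rfl⟩ : ∃ k, n = k + 3 := ⟨n - 3, by omega⟩
    rw [if_neg (by omega), FF_closed]
    congr 1
end

section
/- In NSym, for every integer n ≥ 3: Σ_{I = (i_1, …, i_l) ⊨ n, i_1 ≥ 2} i_1·(i_2 − 1)⋯(i_l − 1) · Λ^I = (1/2) · Σ_{I ∈ 𝒞_n, I begins with (1,2)} 2^{m_1(I)} · R_I + (3/8) · Σ_{I ∈ 𝒞_n, I begins with (1,1)} 2^{m_1(I)} · R_I, where the first sum is over all compositions I of n whose first part is at least 2, 𝒞_n is the set of compositions of n all of whose parts are 1 or 2 and whose last part is 1, and m_1(I) is the number of parts of I equal to 1. -/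
open scoped Classical

noncomputable section

/-- `NSym = ℚ⟨Λ₁, Λ₂, …⟩`, the free associative `ℚ`-algebra on noncommuting generators. -/
abbrev NSym : Type := FreeAlgebra ℚ ℕ

/-- The elementary noncommutative symmetric functions: `Λ 0 = 1` and `Λ (k+1)` is the
`(k+1)`-st generator. -/
def Lam : ℕ → NSym
  | 0 => 1
  | k + 1 => FreeAlgebra.ι ℚ k

/-- The complete homogeneous noncommutative symmetric functions, defined by `S 0 = 1` and
`S n = ∑_{k=1}^{n} (−1)^{k−1} Λ_k S_{n−k}` for `n ≥ 1`. -/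
def Sc : ℕ → NSym
  | 0 => 1
  | n + 1 => ∑ k ∈ Finset.range (n + 1), ((-1 : ℚ) ^ k) • (Lam (k + 1) * Sc (n - k))
  decreasing_by exact Nat.lt_succ_of_le (Nat.sub_le _ _)

/-- The noncommutative power sums of the first kind:
`Ψ n = ∑_{k=0}^{n−1} (−1)^k (n−k) Λ_k S_{n−k}`. -/
def Psi (n : ℕ) : NSym :=
  ∑ k ∈ Finset.range n, ((-1 : ℚ) ^ k * ((n - k : ℕ) : ℚ)) • (Lam k * Sc (n - k))

/-- `Λ^I`, the product of the `Λ`'s over the parts of a composition. -/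
def LamProd {n : ℕ} (I : Composition n) : NSym := (I.blocks.map Lam).prod

/-- `S^I`, the product of the `S`'s over the parts of a composition. -/
def ScProd {n : ℕ} (I : Composition n) : NSym := (I.blocks.map Sc).prod

/-- `Ψ^I`, the product of the `Ψ`'s over the parts of a composition. -/
def PsiProd {n : ℕ} (I : Composition n) : NSym := (I.blocks.map Psi).prod

/-- `J` is a coarsening of `I` if `I` can be partitioned into consecutive nonempty blocks
whose block sums, in order, form `J`. -/
def IsCoarsening (I J : List ℕ) : Prop :=
  ∃ P : List (List ℕ), (∀ p ∈ P, p ≠ []) ∧ P.flatten = I ∧ P.map List.sum = J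

/-- The ribbon Schur function `R_I = ∑_{J a coarsening of I} (−1)^{ℓ(I)−ℓ(J)} S^J`. -/
def Rib {n : ℕ} (I : Composition n) : NSym :=
  ∑ J : Composition n,
    if IsCoarsening I.blocks J.blocks then ((-1 : ℚ) ^ (I.length - J.length)) • ScProd J else 0

def comps : ℕ → Finset (List ℕ)
  | 0 => {[]}
  | n + 1 => (Finset.range (n+1)).biUnion
      (fun k => (comps (n - k)).image (fun L => (k+1) :: L))
  decreasing_by exact Nat.lt_succ_of_le (Nat.sub_le _ _)

lemma comps_zero : comps 0 = {[]} := by rw [comps]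

lemma mem_comps : ∀ n L, L ∈ comps n ↔ L.sum = n ∧ ∀ p ∈ L, 0 < p := by
  intro n
  induction n using Nat.strong_induction_on with
  | _ n ih =>
    intro L
    match n with
    | 0 =>
      rw [comps]
      simp only [Finset.mem_singleton]
      constructor
      · rintro rfl; simp
      · rintro ⟨h1, h2⟩
        cases L with
        | nil => rfl
        | cons a L =>
          exfalso
          have := h2 a (by simp)
          simp at h1; omega
    | n + 1 =>
      rw [comps]
      simp only [Finset.mem_biUnion, Finset.mem_range, Finset.mem_image]
      constructor
      · rintro ⟨k, hk, L', hL', rfl⟩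
        rw [ih (n - k) (by omega) L'] at hL'
        refine ⟨by simp [hL'.1]; omega, ?_⟩
        intro p hp
        rcases List.mem_cons.1 hp with rfl | hp
        · omega
        · exact hL'.2 p hp
      · rintro ⟨h1, h2⟩
        cases L with
        | nil => simp at h1
        | cons a L' =>
          have ha : 0 < a := h2 a (by simp)
          simp only [List.sum_cons] at h1
          refine ⟨a - 1, by omega, L', ?_, by congr 1; omega⟩
          rw [ih (n - (a-1)) (by omega) L']
          exact ⟨by omega, fun p hp => h2 p (by simp [hp])⟩

lemma sum_comps_peel {M : Type*} [AddCommMonoid M] (n : ℕ) (f : List ℕ → M) :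
    ∑ L ∈ comps (n+1), f L
      = ∑ k ∈ Finset.range (n+1), ∑ L ∈ comps (n-k), f ((k+1) :: L) := by
  rw [comps]
  rw [Finset.sum_biUnion]
  · refine Finset.sum_congr rfl (fun k _ => ?_)
    rw [Finset.sum_image]
    intro a _ b _ h
    exact (List.cons.injEq _ _ _ _ ▸ h).2
  · intro i _ j _ hij
    simp only [Function.onFun, Finset.disjoint_left]
    intro L hL hL'
    simp only [Finset.mem_image] at hL hL'
    obtain ⟨a, _, rfl⟩ := hL
    obtain ⟨b, _, hb⟩ := hL'
    apply hij
    have := (List.cons.injEq _ _ _ _ ▸ hb.symm).1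
    omega

lemma len_le_sum {L : List ℕ} (h : ∀ p ∈ L, 0 < p) : L.length ≤ L.sum := by
  induction L with
  | nil => simp
  | cons a L ih =>
    simp only [List.length_cons, List.sum_cons]
    have := h a (by simp)
    have := ih (fun p hp => h p (by simp [hp]))
    omega

lemma comps_ne_nil {n : ℕ} (hn : 1 ≤ n) {L : List ℕ} (h : L ∈ comps n) : L ≠ [] := by
  rw [mem_comps] at h
  rintro rfl; simp at h; omega

lemma mem_comps_append {j s : ℕ} {A L : List ℕ} (hA : A ∈ comps j) (hL : L ∈ comps s) :
    A ++ L ∈ comps (j + s) := by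
  rw [mem_comps] at *
  simp only [List.sum_append, List.mem_append]
  exact ⟨by rw [hA.1, hL.1], fun p hp => hp.elim (hA.2 p) (hL.2 p)⟩

lemma sum_comps_head {M : Type*} [AddCommMonoid M] {n a : ℕ} (ha : 1 ≤ a) (han : a ≤ n)
    (f : List ℕ → M) (hf : ∀ L ∈ comps n, L.headI ≠ a → f L = 0) :
    ∑ L ∈ comps n, f L = ∑ L ∈ comps (n - a), f (a :: L) := by
  obtain ⟨m, rfl⟩ : ∃ m, n = m + 1 := ⟨n - 1, by omega⟩
  rw [sum_comps_peel]
  rw [Finset.sum_eq_single (a - 1)]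
  · have h1 : a - 1 + 1 = a := by omega
    have h2 : m - (a - 1) = m + 1 - a := by omega
    rw [h1, h2]
  · intro k hk hka
    apply Finset.sum_eq_zero
    intro L hL
    apply hf
    · rw [mem_comps] at hL ⊢
      constructor
      · simp [hL.1]; simp at hk; omega
      · intro p hp
        rcases List.mem_cons.1 hp with rfl | hp
        · omega
        · exact hL.2 p hp
    · simp only [List.headI]; omega
  · intro h
    simp at h; omega

def lamP (L : List ℕ) : NSym := (L.map Lam).prod

lemma lamP_nil : lamP [] = 1 := rfl
lemma lamP_cons (a : ℕ) (L : List ℕ) : lamP (a :: L) = Lam a * lamP L := by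
  simp [lamP]
lemma lamP_append (A L : List ℕ) : lamP (A ++ L) = lamP A * lamP L := by
  simp [lamP]

lemma neg_one_pow_sub {a b : ℕ} (h : b ≤ a) :
    ((-1 : ℚ)) ^ (a - b) = (-1) ^ a * (-1) ^ b := by
  have h1 : a - b + (b + b) = a + b := by omega
  have h2 : ((-1:ℚ)) ^ (a - b) * ((-1)^b * (-1)^b) = (-1)^a * (-1)^b := by
    rw [← pow_add, ← pow_add, h1, pow_add]
  simpa [← pow_add] using h2

lemma Sc_eq : ∀ n, Sc n = ∑ L ∈ comps n, ((-1 : ℚ) ^ (n - L.length)) • lamP L := by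
  intro n
  induction n using Nat.strong_induction_on with
  | _ n ih =>
    match n with
    | 0 => rw [Sc, comps_zero]; simp [lamP]
    | n + 1 =>
      rw [Sc, sum_comps_peel (f := fun L => ((-1 : ℚ) ^ (n + 1 - L.length)) • lamP L)]
      refine Finset.sum_congr rfl (fun k hk => ?_)
      rw [ih (n - k) (by omega)]
      rw [Finset.mul_sum, Finset.smul_sum]
      refine Finset.sum_congr rfl (fun L hL => ?_)
      rw [mul_smul_comm, smul_smul, lamP_cons]
      congr 1
      rw [← pow_add]
      congr 1
      have h1 : L.length ≤ n - k := by
        rw [mem_comps] at hL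
        have := len_le_sum hL.2
        omega
      simp only [List.length_cons]
      simp at hk
      omega

lemma coars_nil_right {L : List ℕ} : IsCoarsening L [] ↔ L = [] := by
  constructor
  · rintro ⟨P, hP, rfl, hPs⟩
    have : P = [] := by simpa using hPs
    simp [this]
  · rintro rfl; exact ⟨[], by simp, by simp, by simp⟩

lemma coars_cons_iff {L : List ℕ} {j : ℕ} {J : List ℕ} :
    IsCoarsening L (j :: J) ↔
      ∃ A L', A ≠ [] ∧ A.sum = j ∧ L = A ++ L' ∧ IsCoarsening L' J := by
  constructor
  · rintro ⟨P, hP, rfl, hPs⟩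
    cases P with
    | nil => simp at hPs
    | cons A P' =>
      simp only [List.map_cons, List.cons.injEq] at hPs
      exact ⟨A, P'.flatten, hP A (by simp), hPs.1, by simp,
        P', fun p hp => hP p (by simp [hp]), rfl, hPs.2⟩
  · rintro ⟨A, L', hA, hAs, rfl, P, hP, rfl, hPs⟩
    refine ⟨A :: P, ?_, by simp, by simp [hAs, hPs]⟩
    intro p hp
    rcases List.mem_cons.1 hp with rfl | hp
    · exact hA
    · exact hP p hp

lemma prefix_eq_of_sum : ∀ (A B L M : List ℕ), A ++ L = B ++ M → A.sum = B.sum →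
    (∀ p ∈ A, 0 < p) → (∀ p ∈ B, 0 < p) → A = B ∧ L = M := by
  intro A
  induction A with
  | nil =>
    intro B L M he hs _ hB
    cases B with
    | nil => simpa using he
    | cons b B' =>
      exfalso
      have := hB b (by simp)
      simp at hs; omega
  | cons a A' ih =>
    intro B L M he hs hA hB
    cases B with
    | nil =>
      exfalso
      have := hA a (by simp)
      simp at hs; omega
    | cons b B' =>
      simp only [List.cons_append, List.cons.injEq] at he
      obtain ⟨rfl, he2⟩ := he
      simp only [List.sum_cons, Nat.add_right_cancel_iff] at hs
      obtain ⟨h1, h2⟩ := ih B' L M he2 (by omega)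
        (fun p hp => hA p (by simp [hp])) (fun p hp => hB p (by simp [hp]))
      exact ⟨by rw [h1], h2⟩

lemma coars_singleton_right {L : List ℕ} (hL : L ≠ []) : IsCoarsening L [L.sum] := by
  rw [coars_cons_iff]
  exact ⟨L, [], hL, rfl, by simp, coars_nil_right.2 rfl⟩

lemma coars_nil_left {J : List ℕ} (h : IsCoarsening [] J) : J = [] := by
  obtain ⟨P, hP, hf, rfl⟩ := h
  have : P = [] := by
    cases P with
    | nil => rfl
    | cons p P' =>
      exfalso
      have hp := hP p (by simp)
      cases p with
      | nil => exact hp rfl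
      | cons u v => simp at hf
  simp [this]

lemma coars_of_singleton {x : ℕ} {J : List ℕ} (h : IsCoarsening [x] J) : J = [x] := by
  cases J with
  | nil => rw [coars_nil_right] at h; simp at h
  | cons j J' =>
    rw [coars_cons_iff] at h
    obtain ⟨A, L', hA, hAs, he, hco⟩ := h
    cases A with
    | nil => simp at hA
    | cons a A' =>
      simp only [List.cons_append, List.cons.injEq] at he
      obtain ⟨rfl, he2⟩ := he
      have hA' : A' = [] := by
        cases A' with
        | nil => rfl
        | cons u v => exfalso; simpa using congrArg List.length he2
      subst hA'
      simp only [List.nil_append] at he2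
      subst he2
      rw [coars_nil_left hco]
      simp at hAs
      simp [hAs]

lemma coars_length_le {I J : List ℕ} (h : IsCoarsening I J) : J.length ≤ I.length := by
  obtain ⟨P, hP, rfl, rfl⟩ := h
  simp only [List.length_map, List.length_flatten]
  calc P.length = (P.map (fun _ => 1)).sum := by simp
  _ ≤ (P.map List.length).sum := by
      apply List.sum_le_sum
      intro p hp
      have := hP p (by simpa using hp)
      cases p; simp at this; simp
  _ = _ := by simp

lemma coars_sum {I J : List ℕ} (h : IsCoarsening I J) : J.sum = I.sum := by
  obtain ⟨P, hP, rfl, rfl⟩ := h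
  induction P with
  | nil => simp
  | cons p P' ih => simp_all

lemma coars_head_cons {x : ℕ} {X J' : List ℕ} (hX : ∀ p ∈ X, 0 < p) :
    IsCoarsening (x :: X) (x :: J') ↔ IsCoarsening X J' := by
  constructor
  · rw [coars_cons_iff]
    rintro ⟨A, L', hA, hAs, he, hco⟩
    cases A with
    | nil => simp at hA
    | cons a A' =>
      simp only [List.cons_append, List.cons.injEq] at he
      obtain ⟨rfl, he2⟩ := he
      simp only [List.sum_cons] at hAs
      cases A' with
      | nil =>
        simp only [List.nil_append] at he2
        rw [he2]
        exact hco
      | cons u A'' =>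
        exfalso
        have hu : 0 < u := by
          apply hX
          rw [he2]; simp
        simp only [List.sum_cons] at hAs
        omega
  · intro h
    rw [coars_cons_iff]
    exact ⟨[x], X, by simp, by simp, by simp, h⟩

lemma coars_head_ge {x : ℕ} {X J : List ℕ} (hX : ∀ p ∈ x :: X, 0 < p)
    (h : IsCoarsening (x :: X) J) : ∃ j J', J = j :: J' ∧ x ≤ j := by
  cases J with
  | nil => rw [coars_nil_right] at h; simp at h
  | cons j J' =>
    refine ⟨j, J', rfl, ?_⟩
    rw [coars_cons_iff] at h
    obtain ⟨A, L', hA, hAs, he, -⟩ := h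
    cases A with
    | nil => simp at hA
    | cons a A' =>
      simp only [List.cons_append, List.cons.injEq] at he
      obtain ⟨rfl, -⟩ := he
      simp only [List.sum_cons] at hAs
      omega

lemma coars_merge {x y : ℕ} {X J : List ℕ} (hy : 0 < y) :
    (IsCoarsening (x :: y :: X) J ∧ J.headI ≠ x) ↔ IsCoarsening ((x + y) :: X) J := by
  constructor
  · rintro ⟨h, hhead⟩
    cases J with
    | nil => rw [coars_nil_right] at h; simp at h
    | cons j J' =>
      rw [coars_cons_iff] at h ⊢
      obtain ⟨A, L', hA, hAs, he, hco⟩ := h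
      cases A with
      | nil => simp at hA
      | cons a A' =>
        simp only [List.cons_append, List.cons.injEq] at he
        obtain ⟨rfl, he2⟩ := he
        cases A' with
        | nil =>
          exfalso
          apply hhead
          simp only [List.sum_cons, List.sum_nil] at hAs
          simp only [List.headI]
          omega
        | cons b A'' =>
          simp only [List.cons_append, List.cons.injEq] at he2
          obtain ⟨rfl, he3⟩ := he2
          refine ⟨(x + y) :: A'', L', by simp, by simp at hAs ⊢; omega,
            by simp [he3], hco⟩
  · intro h
    cases J with
    | nil => rw [coars_nil_right] at h; simp at h
    | cons j J' =>
      rw [coars_cons_iff] at h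
      obtain ⟨A, L', hA, hAs, he, hco⟩ := h
      cases A with
      | nil => simp at hA
      | cons a A' =>
        simp only [List.cons_append, List.cons.injEq] at he
        obtain ⟨rfl, he2⟩ := he
        constructor
        · rw [coars_cons_iff]
          exact ⟨x :: y :: A', L', by simp, by simp at hAs ⊢; omega,
            by simp [he2], hco⟩
        · simp only [List.sum_cons] at hAs
          simp only [List.headI]
          omega

lemma sum_comps_split {M : Type*} [AddCommMonoid M] {j s : ℕ} (hj : 1 ≤ j) {J' : List ℕ}
    (hJ's : J'.sum = s) (F : List ℕ → M) :
    ∑ L ∈ comps (j+s), (if IsCoarsening L (j::J') then F L else 0)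
      = ∑ A ∈ comps j, ∑ L' ∈ comps s, (if IsCoarsening L' J' then F (A ++ L') else 0) := by
  rw [← Finset.sum_product']
  rw [← Finset.sum_filter (p := fun L => IsCoarsening L (j::J')) (f := F),
      ← Finset.sum_filter (p := fun p : List ℕ × List ℕ => IsCoarsening p.2 J')
        (f := fun p => F (p.1 ++ p.2))]
  symm
  apply Finset.sum_bij (i := fun (p : List ℕ × List ℕ) _ => p.1 ++ p.2)
  · rintro ⟨A, L'⟩ hp
    simp only [Finset.mem_filter, Finset.mem_product] at hp ⊢
    obtain ⟨⟨hA, hL'⟩, hco⟩ := hp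
    refine ⟨mem_comps_append hA hL', ?_⟩
    rw [coars_cons_iff]
    exact ⟨A, L', comps_ne_nil hj hA, ((mem_comps _ _).1 hA).1, rfl, hco⟩
  · rintro ⟨A1, L1⟩ h1 ⟨A2, L2⟩ h2 he
    simp only [Finset.mem_filter, Finset.mem_product, mem_comps] at h1 h2
    obtain ⟨h1', _⟩ := prefix_eq_of_sum A1 A2 L1 L2 he
      (by rw [h1.1.1.1, h2.1.1.1]) h1.1.1.2 h2.1.1.2
    simp_all
  · rintro L hL
    simp only [Finset.mem_filter] at hL
    obtain ⟨hLm, hco⟩ := hL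
    rw [coars_cons_iff] at hco
    obtain ⟨A, L', hA, hAs, rfl, hco'⟩ := hco
    rw [mem_comps] at hLm
    have hApos : ∀ p ∈ A, 0 < p := fun p hp => hLm.2 p (by simp [hp])
    have hL'pos : ∀ p ∈ L', 0 < p := fun p hp => hLm.2 p (by simp [hp])
    have hL's : L'.sum = s := by
      have := hLm.1
      simp only [List.sum_append] at this
      omega
    refine ⟨(A, L'), ?_, rfl⟩
    simp only [Finset.mem_filter, Finset.mem_product, mem_comps]
    exact ⟨⟨⟨hAs, hApos⟩, ⟨hL's, hL'pos⟩⟩, hco'⟩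
  · intros; rfl

def scP (L : List ℕ) : NSym := (L.map Sc).prod

lemma scP_cons (a : ℕ) (L : List ℕ) : scP (a :: L) = Sc a * scP L := by
  simp [scP]

lemma scP_eq : ∀ (J : List ℕ), (∀ p ∈ J, 0 < p) →
    scP J = ∑ L ∈ comps J.sum,
      (if IsCoarsening L J then ((-1 : ℚ) ^ (J.sum - L.length)) • lamP L else 0) := by
  intro J
  induction J with
  | nil =>
    intro _
    simp only [List.sum_nil, comps_zero, Finset.sum_singleton]
    rw [if_pos (coars_nil_right.2 rfl)]
    simp [scP, lamP]
  | cons j J' ih =>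
    intro hpos
    have hj : 1 ≤ j := hpos j (by simp)
    have hJ' : ∀ p ∈ J', 0 < p := fun p hp => hpos p (by simp [hp])
    rw [scP_cons, Sc_eq, ih hJ']
    have hsum : (j :: J').sum = j + J'.sum := by simp
    rw [hsum, sum_comps_split hj rfl
      (F := fun L => ((-1 : ℚ) ^ (j + J'.sum - L.length)) • lamP L)]
    rw [Finset.sum_mul_sum]
    refine Finset.sum_congr rfl (fun A hA => Finset.sum_congr rfl (fun L' hL' => ?_))
    rw [mul_ite, mul_zero]
    split
    · rw [smul_mul_smul_comm, lamP_append, ← pow_add]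
      congr 2
      have h1 : A.length ≤ j := by
        rw [mem_comps] at hA
        have := len_le_sum hA.2; omega
      have h2 : L'.length ≤ J'.sum := by
        rw [mem_comps] at hL'
        have := len_le_sum hL'.2; omega
      simp only [List.length_append]
      omega
    · rfl

def Disj : List ℕ → List ℕ → Prop
  | a :: I, b :: K =>
    if I = [] ∨ K = [] then True
    else if a = b then False
    else if a < b then Disj I ((b - a) :: K)
    else Disj ((a - b) :: I) K
  | _, _ => True
termination_by I K => I.length + K.length
decreasing_by all_goals (simp only [List.length_cons]; omega)

lemma disj_nil_left (K : List ℕ) : Disj [] K := by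
  rw [Disj.eq_def]; cases K <;> simp

lemma disj_nil_right (I : List ℕ) : Disj I [] := by
  rw [Disj.eq_def]; cases I <;> simp

lemma disj_singleton_left (a : ℕ) (K : List ℕ) : Disj [a] K := by
  rw [Disj.eq_def]; cases K <;> simp

lemma disj_singleton_right (I : List ℕ) (b : ℕ) : Disj I [b] := by
  rw [Disj.eq_def]; cases I <;> simp

lemma disj_eq_of_ne {a b : ℕ} {I K : List ℕ} (hI : I ≠ []) (hK : K ≠ []) (h : a = b) :
    ¬ Disj (a :: I) (b :: K) := by
  rw [Disj]
  simp [hI, hK, h]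

lemma disj_lt {a b : ℕ} {I K : List ℕ} (hI : I ≠ []) (hK : K ≠ []) (h : a < b) :
    Disj (a :: I) (b :: K) = Disj I ((b - a) :: K) := by
  rw [Disj]
  simp [hI, hK, h, Nat.ne_of_lt h]

lemma disj_gt {a b : ℕ} {I K : List ℕ} (hI : I ≠ []) (hK : K ≠ []) (h : b < a) :
    Disj (a :: I) (b :: K) = Disj ((a - b) :: I) K := by
  rw [Disj]
  simp [hI, hK, Nat.ne_of_gt h]
  omega

lemma disj_comm : ∀ m (I K : List ℕ), I.length + K.length ≤ m → (Disj I K ↔ Disj K I) := by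
  intro m
  induction m with
  | zero =>
    intro I K h
    have hI : I = [] := List.length_eq_zero_iff.mp (by omega)
    have hK : K = [] := List.length_eq_zero_iff.mp (by omega)
    subst hI; subst hK; rfl
  | succ m ih =>
    intro I K h
    match I, K with
    | [], K => simp [disj_nil_left, disj_nil_right]
    | I, [] => simp [disj_nil_left, disj_nil_right]
    | [a], K => simp [disj_singleton_left, disj_singleton_right]
    | I, [b] => simp [disj_singleton_left, disj_singleton_right]
    | a :: i :: I', b :: k :: K' =>
      have hI : (i :: I') ≠ [] := by simp
      have hK : (k :: K') ≠ [] := by simp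
      rcases Nat.lt_trichotomy a b with hab | hab | hab
      · rw [disj_lt hI hK hab, disj_gt hK hI hab]
        apply ih
        simp only [List.length_cons] at h ⊢
        omega
      · constructor
        · intro hc; exact absurd hc (disj_eq_of_ne hI hK hab)
        · intro hc; exact absurd hc (disj_eq_of_ne hK hI hab.symm)
      · rw [disj_gt hI hK hab, disj_lt hK hI hab]
        apply ih
        simp only [List.length_cons] at h ⊢
        omega

lemma disj_shift {c y z : ℕ} {Y Z : List ℕ} :
    Disj ((c + y) :: Y) ((c + z) :: Z) ↔ Disj (y :: Y) (z :: Z) := by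
  by_cases hY : Y = []
  · subst hY; simp [disj_singleton_left]
  by_cases hZ : Z = []
  · subst hZ; simp [disj_singleton_right]
  rcases Nat.lt_trichotomy y z with h | h | h
  · rw [disj_lt hY hZ (by omega), disj_lt hY hZ h]
    have he : c + z - (c + y) = z - y := by omega
    rw [he]
  · exact iff_of_false (disj_eq_of_ne hY hZ (by omega)) (disj_eq_of_ne hY hZ h)
  · rw [disj_gt hY hZ (by omega), disj_gt hY hZ h]
    have he : c + y - (c + z) = y - z := by omega
    rw [he]

lemma disj_merge_left {a b y : ℕ} {Y K' : List ℕ} (hab : a < b) (hK' : K' ≠ []) :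
    Disj ((a + y) :: Y) (b :: K') ↔ Disj (a :: y :: Y) (b :: K') := by
  have hyY : (y :: Y) ≠ [] := by simp
  rw [disj_lt hyY hK' hab]
  by_cases hY : Y = []
  · subst hY; simp [disj_singleton_left]
  rcases Nat.lt_trichotomy (a + y) b with h | h | h
  · rw [disj_lt hY hK' h, disj_lt hY hK' (by omega)]
    have he : b - a - y = b - (a + y) := by omega
    rw [he]
  · exact iff_of_false (disj_eq_of_ne hY hK' h) (disj_eq_of_ne hY hK' (by omega))
  · rw [disj_gt hY hK' h, disj_gt hY hK' (by omega)]
    have he : y - (b - a) = a + y - b := by omega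
    rw [he]

lemma sum_ite_and_split {α M : Type*} [AddCommMonoid M] (s : Finset α) (P Q : α → Prop)
    (f : α → M) :
    (∑ x ∈ s, if P x then f x else 0)
      = (∑ x ∈ s, if P x ∧ Q x then f x else 0)
        + (∑ x ∈ s, if P x ∧ ¬ Q x then f x else 0) := by
  rw [← Finset.sum_add_distrib]
  refine Finset.sum_congr rfl (fun x _ => ?_)
  by_cases hP : P x <;> by_cases hQ : Q x <;> simp [hP, hQ]

lemma singleton_mem_comps {n : ℕ} (hn : 1 ≤ n) : [n] ∈ comps n := by
  rw [mem_comps]; constructor <;> simp; omega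

lemma lemG : ∀ m, ∀ I K : List ℕ, I.length + K.length ≤ m → ∀ n, 1 ≤ n →
    I ∈ comps n → K ∈ comps n →
    (∑ J ∈ comps n, if IsCoarsening I J ∧ IsCoarsening K J then ((-1:ℚ)) ^ J.length else 0)
      = if Disj I K then -1 else 0 := by
  intro m
  induction m with
  | zero =>
    intro I K h n hn hI hK
    have hInil : I = [] := List.length_eq_zero_iff.mp (by omega)
    exact absurd hInil (comps_ne_nil hn hI)
  | succ m ih =>
    intro I K h n hn hI hK
    have hImem := (mem_comps _ _).1 hI
    have hKmem := (mem_comps _ _).1 hK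
    obtain ⟨a, I', rfl⟩ : ∃ a I', I = a :: I' := by
      cases I with
      | nil => exact absurd rfl (comps_ne_nil hn hI)
      | cons a I' => exact ⟨a, I', rfl⟩
    obtain ⟨b, K', rfl⟩ : ∃ b K', K = b :: K' := by
      cases K with
      | nil => exact absurd rfl (comps_ne_nil hn hK)
      | cons b K' => exact ⟨b, K', rfl⟩
    -- singleton cases
    by_cases hI' : I' = []
    · subst hI'
      have han : a = n := by simpa using hImem.1
      subst han
      rw [Finset.sum_eq_single [a]]
      · rw [if_pos, if_pos (disj_singleton_left a (b :: K'))]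
        · simp
        · constructor
          · have := coars_singleton_right (L := [a]) (by simp)
            simpa using this
          · have := coars_singleton_right (L := b :: K') (by simp)
            rw [hKmem.1] at this
            exact this
      · intro J hJ hJne
        rw [if_neg]
        rintro ⟨h1, -⟩
        exact hJne (coars_of_singleton h1)
      · intro hmem
        exact absurd (singleton_mem_comps hn) hmem
    by_cases hK' : K' = []
    · subst hK'
      have hbn : b = n := by simpa using hKmem.1
      subst hbn
      rw [Finset.sum_eq_single [b]]
      · rw [if_pos, if_pos (disj_singleton_right (a :: I') b)]
        · simp
        · constructor
          · have := coars_singleton_right (L := a :: I') (by simp)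
            rw [hImem.1] at this
            exact this
          · have := coars_singleton_right (L := [b]) (by simp)
            simpa using this
      · intro J hJ hJne
        rw [if_neg]
        rintro ⟨-, h2⟩
        exact hJne (coars_of_singleton h2)
      · intro hmem
        exact absurd (singleton_mem_comps hn) hmem
    -- main case
    obtain ⟨i2, I'', rfl⟩ : ∃ i2 I'', I' = i2 :: I'' := by
      cases I' with
      | nil => exact absurd rfl hI'
      | cons i2 I'' => exact ⟨i2, I'', rfl⟩
    obtain ⟨k2, K'', rfl⟩ : ∃ k2 K'', K' = k2 :: K'' := by
      cases K' with
      | nil => exact absurd rfl hK'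
      | cons k2 K'' => exact ⟨k2, K'', rfl⟩
    have hpI : ∀ p ∈ a :: i2 :: I'', 0 < p := hImem.2
    have hpK : ∀ p ∈ b :: k2 :: K'', 0 < p := hKmem.2
    have hi2 : 0 < i2 := hpI i2 (by simp)
    have hk2 : 0 < k2 := hpK k2 (by simp)
    have ha : 0 < a := hpI a (by simp)
    have hb : 0 < b := hpK b (by simp)
    have hIs : a + (i2 + I''.sum) = n := by simpa using hImem.1
    have hKs : b + (k2 + K''.sum) = n := by simpa using hKmem.1
    have hImerge : (a + i2) :: I'' ∈ comps n := by
      rw [mem_comps]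
      constructor
      · simp; omega
      · intro p hp
        rcases List.mem_cons.1 hp with rfl | hp
        · omega
        · exact hpI p (by simp [hp])
    have hKmerge : (b + k2) :: K'' ∈ comps n := by
      rw [mem_comps]
      constructor
      · simp; omega
      · intro p hp
        rcases List.mem_cons.1 hp with rfl | hp
        · omega
        · exact hpK p (by simp [hp])
    rcases Nat.lt_trichotomy a b with hab | hab | hab
    · -- a < b : all common coarsenings have head ≥ b > a
      have key : ∀ J ∈ comps n,
          ((IsCoarsening (a :: i2 :: I'') J ∧ IsCoarsening (b :: k2 :: K'') J)
            ↔ (IsCoarsening ((a + i2) :: I'') J ∧ IsCoarsening (b :: k2 :: K'') J)) := by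
        intro J _
        constructor
        · rintro ⟨h1, h2⟩
          refine ⟨(coars_merge hi2).1 ⟨h1, ?_⟩, h2⟩
          obtain ⟨j, J', rfl, hle⟩ := coars_head_ge hpK h2
          simp only [List.headI]
          omega
        · rintro ⟨h1, h2⟩
          refine ⟨((coars_merge hi2).2 h1).1, h2⟩
      calc (∑ J ∈ comps n, if IsCoarsening (a :: i2 :: I'') J ∧ IsCoarsening (b :: k2 :: K'') J
              then ((-1:ℚ)) ^ J.length else 0)
          = ∑ J ∈ comps n, if IsCoarsening ((a + i2) :: I'') J ∧ IsCoarsening (b :: k2 :: K'') J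
              then ((-1:ℚ)) ^ J.length else 0 := by
            refine Finset.sum_congr rfl (fun J hJ => ?_)
            rw [if_congr (key J hJ) rfl rfl]
        _ = if Disj ((a + i2) :: I'') (b :: k2 :: K'') then -1 else 0 := by
            apply ih _ _ (by simp at h ⊢; omega) n hn hImerge hK
        _ = if Disj (a :: i2 :: I'') (b :: k2 :: K'') then -1 else 0 := by
            rw [if_congr (disj_merge_left hab (by simp)) rfl rfl]
    · -- a = b
      subst hab
      have hsplit : (∑ J ∈ comps n, if IsCoarsening (a :: i2 :: I'') J ∧
              IsCoarsening (a :: k2 :: K'') J then ((-1:ℚ)) ^ J.length else 0)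
          = (∑ J ∈ comps n, if (IsCoarsening (a :: i2 :: I'') J ∧
              IsCoarsening (a :: k2 :: K'') J) ∧ J.headI = a then ((-1:ℚ)) ^ J.length else 0)
            + (∑ J ∈ comps n, if (IsCoarsening (a :: i2 :: I'') J ∧
              IsCoarsening (a :: k2 :: K'') J) ∧ ¬ J.headI = a
              then ((-1:ℚ)) ^ J.length else 0) := by
        rw [← Finset.sum_add_distrib]
        refine Finset.sum_congr rfl (fun J _ => ?_)
        by_cases hP : IsCoarsening (a :: i2 :: I'') J ∧ IsCoarsening (a :: k2 :: K'') J <;>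
          by_cases hQ : J.headI = a <;> simp [hP, hQ]
      rw [hsplit]
      have part1 : (∑ J ∈ comps n,
          if (IsCoarsening (a :: i2 :: I'') J ∧ IsCoarsening (a :: k2 :: K'') J) ∧ J.headI = a
          then ((-1:ℚ)) ^ J.length else 0)
          = - (if Disj (i2 :: I'') (k2 :: K'') then -1 else 0) := by
        have han : a ≤ n := by omega
        rw [sum_comps_head ha han]
        · have hrw : ∀ J' ∈ comps (n - a),
              (((IsCoarsening (a :: i2 :: I'') (a :: J') ∧
                IsCoarsening (a :: k2 :: K'') (a :: J')) ∧ (a :: J').headI = a))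
              ↔ (IsCoarsening (i2 :: I'') J' ∧ IsCoarsening (k2 :: K'') J') := by
            intro J' _
            rw [coars_head_cons (fun p hp => hpI p (by simp [hp])),
                coars_head_cons (fun p hp => hpK p (by simp [hp]))]
            simp
          rw [← ih (i2 :: I'') (k2 :: K'') (by simp at h ⊢; omega) (n - a) (by omega)
            (by rw [mem_comps]; exact ⟨by simp; omega, fun p hp => hpI p (by simp [hp])⟩)
            (by rw [mem_comps]; exact ⟨by simp; omega, fun p hp => hpK p (by simp [hp])⟩)]
          rw [← Finset.sum_neg_distrib]
          refine Finset.sum_congr rfl (fun J' hJ' => ?_)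
          rw [if_congr (hrw J' hJ') rfl rfl]
          by_cases hc : IsCoarsening (i2 :: I'') J' ∧ IsCoarsening (k2 :: K'') J'
          · rw [if_pos hc, if_pos hc]
            simp only [List.length_cons, pow_succ]
            ring
          · rw [if_neg hc, if_neg hc, neg_zero]
        · intro L _ hLh
          rw [if_neg]
          rintro ⟨-, h2⟩
          exact hLh h2
      have part2 : (∑ J ∈ comps n,
          if (IsCoarsening (a :: i2 :: I'') J ∧ IsCoarsening (a :: k2 :: K'') J) ∧ ¬ J.headI = a
          then ((-1:ℚ)) ^ J.length else 0)
          = if Disj (i2 :: I'') (k2 :: K'') then -1 else 0 := by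
        have hrw : ∀ J ∈ comps n,
            (((IsCoarsening (a :: i2 :: I'') J ∧ IsCoarsening (a :: k2 :: K'') J) ∧ ¬ J.headI = a)
            ↔ (IsCoarsening ((a + i2) :: I'') J ∧ IsCoarsening ((a + k2) :: K'') J)) := by
          intro J _
          constructor
          · rintro ⟨⟨h1, h2⟩, h3⟩
            exact ⟨(coars_merge hi2).1 ⟨h1, h3⟩, (coars_merge hk2).1 ⟨h2, h3⟩⟩
          · rintro ⟨h1, h2⟩
            have := (coars_merge hi2).2 h1
            have := (coars_merge hk2).2 h2
            tauto
        calc _ = ∑ J ∈ comps n, if IsCoarsening ((a + i2) :: I'') J ∧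
                IsCoarsening ((a + k2) :: K'') J then ((-1:ℚ)) ^ J.length else 0 := by
              refine Finset.sum_congr rfl (fun J hJ => ?_)
              rw [if_congr (hrw J hJ) rfl rfl]
          _ = if Disj ((a + i2) :: I'') ((a + k2) :: K'') then -1 else 0 := by
              apply ih _ _ (by simp at h ⊢; omega) n hn hImerge hKmerge
          _ = _ := by rw [if_congr disj_shift rfl rfl]
      rw [part1, part2]
      rw [if_neg (disj_eq_of_ne (by simp) (by simp) rfl)]
      ring
    · -- b < a : symmetric
      have key : ∀ J ∈ comps n,
          ((IsCoarsening (a :: i2 :: I'') J ∧ IsCoarsening (b :: k2 :: K'') J)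
            ↔ (IsCoarsening (a :: i2 :: I'') J ∧ IsCoarsening ((b + k2) :: K'') J)) := by
        intro J _
        constructor
        · rintro ⟨h1, h2⟩
          refine ⟨h1, (coars_merge hk2).1 ⟨h2, ?_⟩⟩
          obtain ⟨j, J', rfl, hle⟩ := coars_head_ge hpI h1
          simp only [List.headI]
          omega
        · rintro ⟨h1, h2⟩
          exact ⟨h1, ((coars_merge hk2).2 h2).1⟩
      calc (∑ J ∈ comps n, if IsCoarsening (a :: i2 :: I'') J ∧ IsCoarsening (b :: k2 :: K'') J
              then ((-1:ℚ)) ^ J.length else 0)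
          = ∑ J ∈ comps n, if IsCoarsening (a :: i2 :: I'') J ∧
              IsCoarsening ((b + k2) :: K'') J then ((-1:ℚ)) ^ J.length else 0 := by
            refine Finset.sum_congr rfl (fun J hJ => ?_)
            rw [if_congr (key J hJ) rfl rfl]
        _ = if Disj (a :: i2 :: I'') ((b + k2) :: K'') then -1 else 0 := by
            apply ih _ _ (by simp at h ⊢; omega) n hn hI hKmerge
        _ = if Disj (a :: i2 :: I'') (b :: k2 :: K'') then -1 else 0 := by
            refine if_congr ?_ rfl rfl
            calc Disj (a :: i2 :: I'') ((b + k2) :: K'')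
                ↔ Disj ((b + k2) :: K'') (a :: i2 :: I'') := disj_comm _ _ _ le_rfl
              _ ↔ Disj (b :: k2 :: K'') (a :: i2 :: I'') := disj_merge_left hab (by simp)
              _ ↔ Disj (a :: i2 :: I'') (b :: k2 :: K'') := disj_comm _ _ _ le_rfl

lemma sum_composition {M : Type*} [AddCommMonoid M] (n : ℕ) (f : List ℕ → M) :
    ∑ I : Composition n, f I.blocks = ∑ L ∈ comps n, f L := by
  apply Finset.sum_bij (i := fun (I : Composition n) _ => I.blocks)
  · intro I _
    rw [mem_comps]
    exact ⟨I.blocks_sum, fun p hp => I.blocks_pos hp⟩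
  · intro I _ J _ h
    exact Composition.ext h
  · intro L hL
    rw [mem_comps] at hL
    exact ⟨⟨L, fun hp => hL.2 _ hp, hL.1⟩, Finset.mem_univ _, rfl⟩
  · intros; rfl

lemma blocks_mem_comps {n : ℕ} (I : Composition n) : I.blocks ∈ comps n := by
  rw [mem_comps]
  exact ⟨I.blocks_sum, fun p hp => I.blocks_pos hp⟩

lemma Rib_expand {n : ℕ} (hn : 1 ≤ n) (I : Composition n) :
    Rib I = ∑ L ∈ comps n,
      if Disj I.blocks L then
        (((-1:ℚ) ^ (n - L.length) * (-1) ^ I.blocks.length * (-1)) • lamP L) else 0 := by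
  have hIb : I.blocks ∈ comps n := blocks_mem_comps I
  have hstep1 : Rib I = ∑ J ∈ comps n,
      (if IsCoarsening I.blocks J then ((-1 : ℚ) ^ (I.blocks.length - J.length)) • scP J
       else 0) := by
    rw [Rib]
    exact sum_composition n (f := fun L => if IsCoarsening I.blocks L
      then ((-1 : ℚ) ^ (I.blocks.length - L.length)) • scP L else 0)
  rw [hstep1]
  have hstep2 : ∀ J ∈ comps n,
      (if IsCoarsening I.blocks J then ((-1 : ℚ) ^ (I.blocks.length - J.length)) • scP J
        else 0)
      = ∑ L ∈ comps n, (if IsCoarsening I.blocks J ∧ IsCoarsening L J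
          then ((-1:ℚ) ^ J.length * ((-1) ^ I.blocks.length * ((-1:ℚ) ^ (n - L.length))))
            • lamP L else 0) := by
    intro J hJ
    have hJmem := (mem_comps _ _).1 hJ
    by_cases hc : IsCoarsening I.blocks J
    · rw [if_pos hc]
      rw [scP_eq J hJmem.2, hJmem.1, Finset.smul_sum]
      refine Finset.sum_congr rfl (fun L hL => ?_)
      by_cases hc2 : IsCoarsening L J
      · rw [if_pos hc2, if_pos ⟨hc, hc2⟩, smul_smul]
        congr 1
        rw [neg_one_pow_sub (coars_length_le hc)]
        ring
      · rw [if_neg hc2, if_neg (by tauto), smul_zero]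
    · rw [if_neg hc]
      symm
      apply Finset.sum_eq_zero
      intro L _
      rw [if_neg (by tauto)]
  rw [Finset.sum_congr rfl hstep2]
  rw [Finset.sum_comm]
  refine Finset.sum_congr rfl (fun L hL => ?_)
  have hfac : ∀ J ∈ comps n, (if IsCoarsening I.blocks J ∧ IsCoarsening L J
          then ((-1:ℚ) ^ J.length * ((-1) ^ I.blocks.length * ((-1:ℚ) ^ (n - L.length))))
            • lamP L else 0)
      = (if IsCoarsening I.blocks J ∧ IsCoarsening L J then ((-1:ℚ)) ^ J.length else 0) •
        (((-1:ℚ) ^ I.blocks.length * ((-1:ℚ) ^ (n - L.length))) • lamP L) := by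
    intro J _
    by_cases hc : IsCoarsening I.blocks J ∧ IsCoarsening L J
    · rw [if_pos hc, if_pos hc, smul_smul]
    · rw [if_neg hc, if_neg hc, zero_smul]
  rw [Finset.sum_congr rfl hfac, ← Finset.sum_smul]
  rw [lemG (I.blocks.length + L.length) I.blocks L le_rfl n hn hIb hL]
  by_cases hd : Disj I.blocks L
  · rw [if_pos hd, if_pos hd, smul_smul]
    congr 1
    ring
  · rw [if_neg hd, if_neg hd, zero_smul]

def okC (I : List ℕ) : Prop := (∀ p ∈ I, p = 1 ∨ p = 2) ∧ I.getLast? = some 1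
def vw (I : List ℕ) : ℚ := 2 ^ (I.count 1) * (-1 : ℚ) ^ (I.count 2)
def CS (n : ℕ) (K : List ℕ) : ℚ := ∑ I ∈ comps n, if okC I ∧ Disj I K then vw I else 0
def CSa (n : ℕ) (K : List ℕ) : ℚ :=
  ∑ I ∈ comps n, if (okC I ∧ Disj I K) ∧ I.headI = 1 then vw I else 0
def tp (K : List ℕ) : ℚ := ((K.tail.map (fun i => i - 1)).prod : ℕ)

lemma tp_cons (x : ℕ) (K : List ℕ) : tp (x :: K) = ((K.map (fun i => i - 1)).prod : ℕ) := rfl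

lemma tp_cons_cons (x k2 : ℕ) (hk2 : 1 ≤ k2) (K'' : List ℕ) :
    tp (x :: k2 :: K'') = ((k2 : ℚ) - 1) * tp (k2 :: K'') := by
  rw [tp_cons, tp_cons]
  simp only [List.map_cons, List.prod_cons]
  push_cast [Nat.cast_sub hk2]
  ring

lemma okC_nil : ¬ okC [] := by simp [okC]

lemma okC_single2 : ¬ okC [2] := by simp [okC]

lemma okC_one : okC [1] := by simp [okC]

lemma okC_cons {c : ℕ} {I : List ℕ} (hI : I ≠ []) :
    okC (c :: I) ↔ ((c = 1 ∨ c = 2) ∧ okC I) := by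
  obtain ⟨x, I', rfl⟩ : ∃ x I', I = x :: I' := by
    cases I with
    | nil => exact absurd rfl hI
    | cons x I' => exact ⟨x, I', rfl⟩
  simp only [okC, List.getLast?_cons_cons, List.mem_cons]
  constructor
  · rintro ⟨h1, h2⟩
    exact ⟨h1 c (Or.inl rfl), fun p hp => h1 p (Or.inr hp), h2⟩
  · rintro ⟨hc, h1, h2⟩
    refine ⟨?_, h2⟩
    rintro p (rfl | hp)
    · exact hc
    · exact h1 p hp

lemma vw_cons1 (I : List ℕ) : vw (1 :: I) = 2 * vw I := by
  simp only [vw, List.count_cons]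
  norm_num
  ring

lemma vw_cons2 (I : List ℕ) : vw (2 :: I) = - vw I := by
  simp only [vw, List.count_cons]
  norm_num
  ring

lemma comps_one : comps 1 = {[1]} := by
  rw [comps]
  simp [comps_zero]

lemma CS_peel {n : ℕ} (hn : 2 ≤ n) (K : List ℕ) :
    CS n K = (∑ I ∈ comps (n-1), if okC I ∧ Disj (1 :: I) K then 2 * vw I else 0)
      + (∑ I ∈ comps (n-2), if okC I ∧ Disj (2 :: I) K then - vw I else 0) := by
  obtain ⟨m, rfl⟩ : ∃ m, n = m + 1 := ⟨n - 1, by omega⟩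
  rw [CS, sum_comps_peel]
  rw [Finset.sum_eq_add_of_mem 0 1 (Finset.mem_range.mpr (by omega))
    (Finset.mem_range.mpr (by omega)) (by omega) ?hrest]
  case hrest =>
    intro k hk hne
    apply Finset.sum_eq_zero
    intro I _
    rw [if_neg]
    rintro ⟨⟨hparts, -⟩, -⟩
    have := hparts (k+1) (by simp)
    omega
  have e1 : m + 1 - 1 = m - 0 := by omega
  have e2 : m + 1 - 2 = m - 1 := by omega
  rw [e1, e2]
  congr 1
  · refine Finset.sum_congr rfl (fun I hI => ?_)
    have hIne : I ≠ [] := by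
      rintro rfl
      rw [mem_comps] at hI
      simp at hI
      omega
    rw [okC_cons hIne, vw_cons1]
    by_cases hd : Disj (1 :: I) K
    · simp [hd]
    · simp [hd]
  · refine Finset.sum_congr rfl (fun I hI => ?_)
    cases I with
    | nil => simp [okC_nil, okC_single2]
    | cons x I' =>
      rw [okC_cons (by simp), vw_cons2]
      by_cases hd : Disj (2 :: x :: I') K
      · simp [hd]
      · simp [hd]

lemma CSa_peel {n : ℕ} (hn : 2 ≤ n) (K : List ℕ) :
    CSa n K = ∑ I ∈ comps (n-1), if okC I ∧ Disj (1 :: I) K then 2 * vw I else 0 := by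
  rw [CSa, sum_comps_head (a := 1) le_rfl (by omega)]
  · refine Finset.sum_congr rfl (fun I hI => ?_)
    have hIne : I ≠ [] := comps_ne_nil (by omega) hI
    have hh : (1 :: I).headI = 1 := rfl
    rw [okC_cons hIne, vw_cons1]
    by_cases hd : Disj (1 :: I) K
    · simp [hd, hh]
    · simp [hd, hh]
  · intro L _ hL
    rw [if_neg]
    rintro ⟨-, h2⟩
    exact hL h2

lemma T1_reduce {n : ℕ} (hn : 2 ≤ n) {k : ℕ} (hk : 2 ≤ k) (K' : List ℕ) :
    (∑ I ∈ comps (n-1), if okC I ∧ Disj (1 :: I) (k :: K') then 2 * vw I else 0)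
      = 2 * CS (n-1) ((k-1) :: K') := by
  rw [CS, Finset.mul_sum]
  refine Finset.sum_congr rfl (fun I hI => ?_)
  have hIne : I ≠ [] := comps_ne_nil (by omega) hI
  have hDiff : Disj (1 :: I) (k :: K') ↔ Disj I ((k-1) :: K') := by
    by_cases hK' : K' = []
    · subst hK'
      simp [disj_singleton_right]
    · rw [disj_lt hIne hK' (by omega)]
  by_cases h : okC I ∧ Disj I ((k-1) :: K')
  · rw [if_pos ⟨h.1, hDiff.2 h.2⟩, if_pos h]
  · rw [if_neg (fun hc => h ⟨hc.1, hDiff.1 hc.2⟩), if_neg h, mul_zero]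

lemma T1_zero {n : ℕ} (hn : 2 ≤ n) {K' : List ℕ} (hK' : K' ≠ []) :
    (∑ I ∈ comps (n-1), if okC I ∧ Disj (1 :: I) (1 :: K') then 2 * vw I else 0) = 0 := by
  apply Finset.sum_eq_zero
  intro I hI
  have hIne : I ≠ [] := comps_ne_nil (by omega) hI
  rw [if_neg]
  rintro ⟨-, h2⟩
  exact disj_eq_of_ne hIne hK' rfl h2

lemma T2_big {n : ℕ} (hn : 3 ≤ n) {k : ℕ} (hk : 3 ≤ k) (K' : List ℕ) :
    (∑ I ∈ comps (n-2), if okC I ∧ Disj (2 :: I) (k :: K') then - vw I else 0)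
      = - CS (n-2) ((k-2) :: K') := by
  rw [CS, ← Finset.sum_neg_distrib]
  refine Finset.sum_congr rfl (fun I hI => ?_)
  have hIne : I ≠ [] := comps_ne_nil (by omega) hI
  have hDiff : Disj (2 :: I) (k :: K') ↔ Disj I ((k-2) :: K') := by
    by_cases hK' : K' = []
    · subst hK'
      simp [disj_singleton_right]
    · rw [disj_lt hIne hK' (by omega)]
  by_cases h : okC I ∧ Disj I ((k-2) :: K')
  · rw [if_pos ⟨h.1, hDiff.2 h.2⟩, if_pos h]
  · rw [if_neg (fun hc => h ⟨hc.1, hDiff.1 hc.2⟩), if_neg h, neg_zero]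

lemma T2_two {n : ℕ} (hn : 3 ≤ n) {K' : List ℕ} (hK' : K' ≠ []) :
    (∑ I ∈ comps (n-2), if okC I ∧ Disj (2 :: I) (2 :: K') then - vw I else 0) = 0 := by
  apply Finset.sum_eq_zero
  intro I hI
  have hIne : I ≠ [] := comps_ne_nil (by omega) hI
  rw [if_neg]
  rintro ⟨-, h2⟩
  exact disj_eq_of_ne hIne hK' rfl h2

lemma T2_one {n : ℕ} (hn : 3 ≤ n) {K' : List ℕ} (hK' : K' ≠ []) :
    (∑ I ∈ comps (n-2), if okC I ∧ Disj (2 :: I) (1 :: K') then - vw I else 0)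
      = - (1/2) * CSa (n-1) K' := by
  rw [CSa_peel (by omega) K']
  have e1 : n - 1 - 1 = n - 2 := by omega
  rw [e1, Finset.mul_sum]
  refine Finset.sum_congr rfl (fun I hI => ?_)
  have hIne : I ≠ [] := comps_ne_nil (by omega) hI
  have hDiff : Disj (2 :: I) (1 :: K') ↔ Disj (1 :: I) K' := by
    rw [disj_gt hIne hK' (by omega)]
  by_cases h : okC I ∧ Disj (1 :: I) K'
  · rw [if_pos ⟨h.1, hDiff.2 h.2⟩, if_pos h]
    ring
  · rw [if_neg (fun hc => h ⟨hc.1, hDiff.1 hc.2⟩), if_neg h, mul_zero]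

lemma CS_closed : ∀ n, 1 ≤ n → ∀ K ∈ comps n,
    (CS n K = 2 * (-1:ℚ)^(K.length + 1) * (K.headI : ℚ) * tp K)
    ∧ (2 ≤ n → CSa n K = 4 * (-1:ℚ)^(K.length + 1) * ((K.headI : ℚ) - 1) * tp K) := by
  intro n
  induction n using Nat.strong_induction_on with
  | _ n ih =>
    intro hn K hK
    have hKmem := (mem_comps _ _).1 hK
    obtain ⟨k, K', rfl⟩ : ∃ k K', K = k :: K' := by
      cases K with
      | nil => exact absurd rfl (comps_ne_nil hn hK)
      | cons k K' => exact ⟨k, K', rfl⟩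
    have hkpos : 0 < k := hKmem.2 k (by simp)
    have hK'pos : ∀ p ∈ K', 0 < p := fun p hp => hKmem.2 p (by simp [hp])
    have hsum : k + K'.sum = n := by simpa using hKmem.1
    by_cases hn1 : n = 1
    · subst hn1
      have hk1 : k = 1 := by omega
      have hK'nil : K' = [] := by
        cases K' with
        | nil => rfl
        | cons x X =>
          exfalso
          have := hK'pos x (by simp)
          simp at hsum
          omega
      subst hk1; subst hK'nil
      constructor
      · rw [CS, comps_one, Finset.sum_singleton,
          if_pos ⟨okC_one, disj_singleton_left 1 [1]⟩]
        norm_num [vw, tp]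
      · intro h; omega
    by_cases hn2 : n = 2
    · subst hn2
      have hcs : CS 2 (k :: K') = if Disj [1, 1] (k :: K') then 4 else 0 := by
        rw [CS_peel le_rfl]
        have e1 : (2:ℕ) - 1 = 1 := rfl
        have e2 : (2:ℕ) - 2 = 0 := rfl
        rw [e1, e2, comps_one, comps_zero, Finset.sum_singleton, Finset.sum_singleton]
        rw [show (if okC [] ∧ Disj (2 :: []) (k :: K') then - vw [] else 0) = 0
          from if_neg (fun hc => okC_nil hc.1)]
        rw [if_congr (and_iff_right okC_one) rfl rfl, add_zero]
        by_cases hd : Disj [1, 1] (k :: K')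
        · rw [if_pos hd, if_pos hd]
          norm_num [vw]
        · rw [if_neg hd, if_neg hd]
      have hcsa : CSa 2 (k :: K') = if Disj [1, 1] (k :: K') then 4 else 0 := by
        rw [CSa_peel le_rfl]
        have e1 : (2:ℕ) - 1 = 1 := rfl
        rw [e1, comps_one, Finset.sum_singleton]
        rw [if_congr (and_iff_right okC_one) rfl rfl]
        by_cases hd : Disj [1, 1] (k :: K')
        · rw [if_pos hd, if_pos hd]
          norm_num [vw]
        · rw [if_neg hd, if_neg hd]
      rcases Nat.lt_trichotomy k 2 with hk | hk | hk
      · -- k = 1, K' = [1]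
        have hk1 : k = 1 := by omega
        subst hk1
        have hK'' : K' = [1] := by
          cases K' with
          | nil => simp at hsum
          | cons x X =>
            have hx := hK'pos x (by simp)
            have hX : X = [] := by
              cases X with
              | nil => rfl
              | cons y Y =>
                exfalso
                have := hK'pos y (by simp)
                simp at hsum
                omega
            subst hX
            simp at hsum
            have hx1 : x = 1 := by omega
            simp [hx1]
        subst hK''
        have hd : ¬ Disj [1, 1] [1, 1] := disj_eq_of_ne (by simp) (by simp) rfl
        constructor
        · rw [hcs, if_neg hd]
          norm_num [tp]
        · intro _
          rw [hcsa, if_neg hd]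
          norm_num [tp]
      · -- k = 2, K' = []
        subst hk
        have hK'nil : K' = [] := by
          cases K' with
          | nil => rfl
          | cons x X =>
            exfalso
            have := hK'pos x (by simp)
            simp at hsum
            omega
        subst hK'nil
        have hd : Disj [1, 1] [2] := disj_singleton_right _ _
        constructor
        · rw [hcs, if_pos hd]
          norm_num [tp]
        · intro _
          rw [hcsa, if_pos hd]
          norm_num [tp]
      · omega
    -- n ≥ 3
    have hn3 : 3 ≤ n := by omega
    have htp : tp ((k-1) :: K') = tp (k :: K') := rfl
    have htp2 : tp ((k-2) :: K') = tp (k :: K') := rfl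
    by_cases hK' : K' = []
    · -- K = [n]
      subst hK'
      have hkn : k = n := by simpa using hsum
      subst hkn
      have hm1 : [k-1] ∈ comps (k-1) := singleton_mem_comps (by omega)
      have hm2 : [k-2] ∈ comps (k-2) := singleton_mem_comps (by omega)
      have ih1 := (ih (k-1) (by omega) (by omega) [k-1] hm1).1
      have ih2 := (ih (k-2) (by omega) (by omega) [k-2] hm2).1
      have hcsval : CS k [k] = 2 * k := by
        rw [CS_peel (by omega), T1_reduce (by omega) (by omega), T2_big (by omega) (by omega)]
        rw [ih1, ih2]
        have c1 : ((k-1 : ℕ) : ℚ) = (k : ℚ) - 1 := by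
          push_cast [Nat.cast_sub (by omega : 1 ≤ k)]; ring
        have c2 : ((k-2 : ℕ) : ℚ) = (k : ℚ) - 2 := by
          push_cast [Nat.cast_sub (by omega : 2 ≤ k)]; ring
        simp only [List.headI, List.length_singleton, tp, List.tail_cons, List.map_nil,
          List.prod_nil, Nat.cast_one, c1, c2]
        ring
      constructor
      · rw [hcsval]
        simp only [List.headI, List.length_singleton, tp, List.tail_cons, List.map_nil,
          List.prod_nil, Nat.cast_one]
        ring
      · intro _
        rw [CSa_peel (by omega), T1_reduce (by omega) (by omega), ih1]
        have c1 : ((k-1 : ℕ) : ℚ) = (k : ℚ) - 1 := by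
          push_cast [Nat.cast_sub (by omega : 1 ≤ k)]; ring
        simp only [List.headI, List.length_singleton, tp, List.tail_cons, List.map_nil,
          List.prod_nil, Nat.cast_one, c1]
        ring
    -- K' ≠ []
    obtain ⟨k2, K'', rfl⟩ : ∃ k2 K'', K' = k2 :: K'' := by
      cases K' with
      | nil => exact absurd rfl hK'
      | cons k2 K'' => exact ⟨k2, K'', rfl⟩
    have hk2pos : 0 < k2 := hK'pos k2 (by simp)
    rcases Nat.lt_trichotomy k 2 with hk | hk | hk
    · -- k = 1
      have hk1 : k = 1 := by omega
      subst hk1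
      have hK'mem : (k2 :: K'') ∈ comps (n-1) := by
        rw [mem_comps]
        exact ⟨by simp at hsum ⊢; omega, hK'pos⟩
      have iha := (ih (n-1) (by omega) (by omega) (k2 :: K'') hK'mem).2 (by omega)
      have hcs1 : CS n (1 :: k2 :: K'') = - (1/2) * CSa (n-1) (k2 :: K'') := by
        rw [CS_peel (by omega), T1_zero (by omega) (by simp), T2_one hn3 (by simp)]
        ring
      constructor
      · rw [hcs1, iha, tp_cons_cons 1 k2 hk2pos K'']
        simp only [List.headI, List.length_cons, Nat.cast_one]
        ring
      · intro _
        rw [CSa_peel (by omega), T1_zero (by omega) (by simp)]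
        simp only [List.headI, Nat.cast_one]
        ring
    · -- k = 2
      subst hk
      have hKdmem : (1 :: k2 :: K'') ∈ comps (n-1) := by
        rw [mem_comps]
        constructor
        · simp at hsum ⊢; omega
        · intro p hp
          rcases List.mem_cons.1 hp with rfl | hp
          · omega
          · exact hK'pos p hp
      have ih1 := (ih (n-1) (by omega) (by omega) (1 :: k2 :: K'') hKdmem).1
      have hcs1 : CS n (2 :: k2 :: K'') = 2 * CS (n-1) (1 :: k2 :: K'') := by
        rw [CS_peel (by omega), T1_reduce (by omega) le_rfl, T2_two hn3 (by simp)]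
        norm_num
      constructor
      · rw [hcs1, ih1]
        simp only [List.headI, List.length_cons, Nat.cast_one, Nat.cast_ofNat, tp_cons]
        ring
      · intro _
        rw [CSa_peel (by omega), T1_reduce (by omega) le_rfl]
        have e1 : (2:ℕ) - 1 = 1 := rfl
        rw [e1, ih1]
        simp only [List.headI, List.length_cons, Nat.cast_one, Nat.cast_ofNat, tp_cons]
        ring
    · -- k ≥ 3
      have hm1 : ((k-1) :: k2 :: K'') ∈ comps (n-1) := by
        rw [mem_comps]
        constructor
        · simp at hsum ⊢; omega
        · intro p hp
          rcases List.mem_cons.1 hp with rfl | hp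
          · omega
          · exact hK'pos p hp
      have hm2 : ((k-2) :: k2 :: K'') ∈ comps (n-2) := by
        rw [mem_comps]
        constructor
        · simp at hsum ⊢; omega
        · intro p hp
          rcases List.mem_cons.1 hp with rfl | hp
          · omega
          · exact hK'pos p hp
      have ih1 := (ih (n-1) (by omega) (by omega) _ hm1).1
      have ih2 := (ih (n-2) (by omega) (by omega) _ hm2).1
      have c1 : ((k-1 : ℕ) : ℚ) = (k : ℚ) - 1 := by
        push_cast [Nat.cast_sub (by omega : 1 ≤ k)]; ring
      have c2 : ((k-2 : ℕ) : ℚ) = (k : ℚ) - 2 := by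
        push_cast [Nat.cast_sub (by omega : 2 ≤ k)]; ring
      constructor
      · rw [CS_peel (by omega), T1_reduce (by omega) (by omega), T2_big hn3 (by omega),
          ih1, ih2]
        simp only [List.headI, List.length_cons, tp_cons, c1, c2]
        ring
      · intro _
        rw [CSa_peel (by omega), T1_reduce (by omega) (by omega), ih1]
        simp only [List.headI, List.length_cons, tp_cons, c1]
        ring

lemma count_len {M : List ℕ} (h : ∀ p ∈ M, p = 1 ∨ p = 2) :
    M.length = M.count 1 + M.count 2 ∧ M.sum = M.count 1 + 2 * M.count 2 := by
  induction M with
  | nil => simp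
  | cons a M ih =>
    obtain ⟨h1, h2⟩ := ih (fun p hp => h p (by simp [hp]))
    rcases h a (by simp) with rfl | rfl <;>
      simp [List.count_cons, h1, h2] <;> omega

lemma sign_eq {n : ℕ} {M L : List ℕ} (hM : ∀ p ∈ M, p = 1 ∨ p = 2) (hMs : M.sum = n)
    (hLlen : L.length ≤ n) :
    (2:ℚ)^(M.count 1) * ((-1:ℚ)^(n - L.length) * (-1)^M.length * (-1))
      = (-1:ℚ)^(L.length+1) * vw M := by
  obtain ⟨hlen, hsum⟩ := count_len hM
  have h1 : (-1:ℚ)^n = (-1)^(M.count 1) := by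
    rw [← hMs, hsum, pow_add, pow_mul]
    norm_num
  have h2 : (-1:ℚ)^M.length = (-1)^(M.count 1) * (-1)^(M.count 2) := by
    rw [hlen, pow_add]
  have h3 : (-1:ℚ)^(M.count 1) * (-1)^(M.count 1) = 1 := by
    rw [← pow_add]
    exact Even.neg_one_pow (Even.add_self _)
  rw [neg_one_pow_sub hLlen, h1, h2, vw, pow_succ]
  linear_combination (2:ℚ)^(M.count 1) * (-1:ℚ)^(L.length) * (-1)^(M.count 2) * (-1) * h3

lemma take_two_head {M : List ℕ} {x : ℕ} (h : M.take 2 = [1, x]) : M.headI = 1 := by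
  cases M with
  | nil => simp at h
  | cons m M' =>
    rw [List.take_succ_cons] at h
    exact (List.cons.injEq _ _ _ _ ▸ h).1

lemma take_one_iff {M : List ℕ} {x : ℕ} : M.take 1 = [x] ↔ (M ≠ [] ∧ M.headI = x) := by
  cases M with
  | nil => simp
  | cons m M' => simp [List.take_succ_cons, eq_comm]

lemma A_zero {n : ℕ} (hn : 3 ≤ n) {K' : List ℕ} (hK' : K' ≠ []) (x : ℕ) (L : List ℕ) (hL : L = 1 :: K') :
    (∑ M ∈ comps n, if (okC M ∧ M.take 2 = [1, x]) ∧ Disj M L then vw M else 0) = 0 := by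
  subst hL
  apply Finset.sum_eq_zero
  intro M _
  rw [if_neg]
  rintro ⟨⟨-, htake⟩, hd⟩
  obtain ⟨m, M', rfl⟩ : ∃ m M', M = m :: M' := by
    cases M with
    | nil => simp at htake
    | cons m M' => exact ⟨m, M', rfl⟩
  rw [List.take_succ_cons] at htake
  have hm : m = 1 := (List.cons.injEq _ _ _ _ ▸ htake).1
  have hM' : M'.take 1 = [x] := (List.cons.injEq _ _ _ _ ▸ htake).2
  have hM'ne : M' ≠ [] := (take_one_iff.1 hM').1
  subst hm
  exact disj_eq_of_ne hM'ne hK' rfl hd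

lemma A_reduce {n : ℕ} (hn : 3 ≤ n) {k : ℕ} (hk : 2 ≤ k) (K' : List ℕ) (x : ℕ) :
    (∑ M ∈ comps n, if (okC M ∧ M.take 2 = [1, x]) ∧ Disj M (k :: K') then vw M else 0)
      = 2 * (∑ M' ∈ comps (n-1),
          if (okC M' ∧ Disj M' ((k-1) :: K')) ∧ M'.headI = x then vw M' else 0) := by
  rw [sum_comps_head (a := 1) le_rfl (by omega)]
  · rw [Finset.mul_sum]
    refine Finset.sum_congr rfl (fun M' hM' => ?_)
    have hM'ne : M' ≠ [] := comps_ne_nil (by omega) hM'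
    have htake : (1 :: M').take 2 = [1, x] ↔ M'.headI = x := by
      rw [List.take_succ_cons]
      constructor
      · intro h
        exact (take_one_iff.1 (List.cons.injEq _ _ _ _ ▸ h).2).2
      · intro h
        have : M'.take 1 = [x] := take_one_iff.2 ⟨hM'ne, h⟩
        rw [this]
    have hok : okC (1 :: M') ↔ okC M' := by
      rw [okC_cons hM'ne]
      simp
    have hdisj : Disj (1 :: M') (k :: K') ↔ Disj M' ((k-1) :: K') := by
      by_cases hK' : K' = []
      · subst hK'
        simp [disj_singleton_right]
      · rw [disj_lt hM'ne hK' (by omega)]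
    by_cases h : (okC M' ∧ Disj M' ((k-1) :: K')) ∧ M'.headI = x
    · rw [if_pos ⟨⟨hok.2 h.1.1, htake.2 h.2⟩, hdisj.2 h.1.2⟩, if_pos h, vw_cons1]
    · rw [if_neg (fun hc => h ⟨⟨hok.1 hc.1.1, hdisj.1 hc.2⟩, htake.1 hc.1.2⟩), if_neg h,
        mul_zero]
  · intro M _ hMh
    rw [if_neg]
    rintro ⟨⟨-, htake⟩, -⟩
    exact hMh (take_two_head htake)

lemma csb_eq {m : ℕ} (hm : 1 ≤ m) (Kd : List ℕ) :
    (∑ M ∈ comps m, if (okC M ∧ Disj M Kd) ∧ M.headI = 2 then vw M else 0)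
      = CS m Kd - CSa m Kd := by
  rw [CS, CSa, ← Finset.sum_sub_distrib]
  refine Finset.sum_congr rfl (fun M hM => ?_)
  by_cases hP : okC M ∧ Disj M Kd
  · have hMne : M ≠ [] := by
      rintro rfl
      exact okC_nil hP.1
    have hhead : M.headI = 1 ∨ M.headI = 2 := by
      obtain ⟨y, M', rfl⟩ : ∃ y M', M = y :: M' := by
        cases M with
        | nil => exact absurd rfl hMne
        | cons y M' => exact ⟨y, M', rfl⟩
      exact hP.1.1 y (by simp)
    rw [if_pos hP]
    rcases hhead with h1 | h2
    · rw [if_neg (fun hc => by rw [h1] at hc; exact absurd hc.2 (by norm_num)),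
        if_pos ⟨hP, h1⟩]
      ring
    · rw [if_pos ⟨hP, h2⟩, if_neg (fun hc => by rw [h2] at hc; exact absurd hc.2 (by norm_num))]
      ring
  · rw [if_neg (fun hc => hP hc.1), if_neg hP, if_neg (fun hc => hP hc.1)]
    ring

lemma keyF {n : ℕ} (hn : 3 ≤ n) {K : List ℕ} (hK : K ∈ comps n) :
    (1/2 : ℚ) * (∑ M ∈ comps n, if (okC M ∧ M.take 2 = [1,2]) ∧ Disj M K then vw M else 0)
    + (3/8 : ℚ) * (∑ M ∈ comps n, if (okC M ∧ M.take 2 = [1,1]) ∧ Disj M K then vw M else 0)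
    = (-1:ℚ)^(K.length+1) *
        (if 2 ≤ K.headI then ((K.headI * ((K.tail.map (fun i => i-1)).prod) : ℕ) : ℚ) else 0) := by
  have hKmem := (mem_comps _ _).1 hK
  obtain ⟨k, K', rfl⟩ : ∃ k K', K = k :: K' := by
    cases K with
    | nil => exact absurd rfl (comps_ne_nil (by omega) hK)
    | cons k K' => exact ⟨k, K', rfl⟩
  have hkpos : 0 < k := hKmem.2 k (by simp)
  have hK'pos : ∀ p ∈ K', 0 < p := fun p hp => hKmem.2 p (by simp [hp])
  have hsum : k + K'.sum = n := by simpa using hKmem.1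
  by_cases hk1 : k = 1
  · subst hk1
    have hK'ne : K' ≠ [] := by
      rintro rfl
      simp at hsum
      omega
    rw [A_zero hn hK'ne 2 _ rfl, A_zero hn hK'ne 1 _ rfl]
    simp
  · have hk2 : 2 ≤ k := by omega
    have hKd : ((k-1) :: K') ∈ comps (n-1) := by
      rw [mem_comps]
      constructor
      · simp; omega
      · intro p hp
        rcases List.mem_cons.1 hp with rfl | hp
        · omega
        · exact hK'pos p hp
    have hcl := CS_closed (n-1) (by omega) ((k-1) :: K') hKd
    have hCS := hcl.1
    have hCSa := hcl.2 (by omega)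
    rw [A_reduce hn hk2 K' 2, A_reduce hn hk2 K' 1, csb_eq (by omega)]
    have hCSa' : (∑ M' ∈ comps (n-1),
        if (okC M' ∧ Disj M' ((k-1) :: K')) ∧ M'.headI = 1 then vw M' else 0)
        = CSa (n-1) ((k-1) :: K') := rfl
    rw [hCSa', hCS, hCSa]
    have c1 : ((k-1 : ℕ) : ℚ) = (k : ℚ) - 1 := by
      push_cast [Nat.cast_sub (by omega : 1 ≤ k)]; ring
    have htp : tp ((k-1) :: K') = ((K'.map (fun i => i-1)).prod : ℕ) := rfl
    simp only [List.headI, List.length_cons, List.tail_cons, c1, htp]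
    erw [if_pos hk2]
    push_cast
    ring

lemma part_eq {n : ℕ} (hn : 1 ≤ n) (c : ℚ) (x : ℕ) :
    c • (∑ I ∈ Finset.univ.filter (fun I : Composition n =>
        ((∀ i ∈ I.blocks, i = 1 ∨ i = 2) ∧ I.blocks.getLast? = some 1) ∧
          I.blocks.take 2 = [1, x]), ((2 : ℚ) ^ (I.blocks.count 1)) • Rib I)
    = ∑ L ∈ comps n,
        (c * ((-1:ℚ)^(L.length + 1)) *
          (∑ M ∈ comps n, if (okC M ∧ M.take 2 = [1, x]) ∧ Disj M L then vw M else 0))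
          • lamP L := by
  rw [Finset.sum_filter]
  have hterm : ∀ I : Composition n,
      (if ((∀ i ∈ I.blocks, i = 1 ∨ i = 2) ∧ I.blocks.getLast? = some 1) ∧
          I.blocks.take 2 = [1, x] then ((2 : ℚ) ^ (I.blocks.count 1)) • Rib I else 0)
      = ∑ L ∈ comps n, (if ((okC I.blocks ∧ I.blocks.take 2 = [1, x]) ∧ Disj I.blocks L)
          then ((((-1:ℚ)^(L.length + 1)) * vw I.blocks) • lamP L) else 0) := by
    intro I
    by_cases hP : okC I.blocks ∧ I.blocks.take 2 = [1, x]
    · rw [if_pos (show ((∀ i ∈ I.blocks, i = 1 ∨ i = 2) ∧ I.blocks.getLast? = some 1) ∧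
        I.blocks.take 2 = [1, x] from ⟨hP.1, hP.2⟩)]
      rw [Rib_expand hn I, Finset.smul_sum]
      refine Finset.sum_congr rfl (fun L hL => ?_)
      by_cases hd : Disj I.blocks L
      · rw [if_pos hd, if_pos ⟨hP, hd⟩, smul_smul]
        congr 1
        have hLlen : L.length ≤ n := by
          rw [mem_comps] at hL
          have := len_le_sum hL.2
          omega
        exact sign_eq hP.1.1 I.blocks_sum hLlen
      · rw [if_neg hd, if_neg (by tauto), smul_zero]
    · rw [if_neg (fun hc => hP ⟨hc.1, hc.2⟩), eq_comm]
      apply Finset.sum_eq_zero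
      intro L _
      rw [if_neg (by tauto)]
  rw [Finset.sum_congr rfl (fun I _ => hterm I)]
  rw [sum_composition n (f := fun M => ∑ L ∈ comps n,
    (if ((okC M ∧ M.take 2 = [1, x]) ∧ Disj M L)
      then ((((-1:ℚ)^(L.length + 1)) * vw M) • lamP L) else 0))]
  rw [Finset.sum_comm, Finset.smul_sum]
  refine Finset.sum_congr rfl (fun L _ => ?_)
  rw [Finset.smul_sum]
  have hper : ∀ M ∈ comps n,
      c • (if ((okC M ∧ M.take 2 = [1, x]) ∧ Disj M L)
        then ((((-1:ℚ)^(L.length + 1)) * vw M) • lamP L) else 0)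
      = (c * ((-1:ℚ)^(L.length + 1)) *
          (if (okC M ∧ M.take 2 = [1, x]) ∧ Disj M L then vw M else 0)) • lamP L := by
    intro M _
    by_cases h : (okC M ∧ M.take 2 = [1, x]) ∧ Disj M L
    · rw [if_pos h, if_pos h, smul_smul]
      congr 1
      ring
    · rw [if_neg h, if_neg h, smul_zero, mul_zero, zero_smul]
  rw [Finset.sum_congr rfl hper, ← Finset.sum_smul, ← Finset.mul_sum]

/-- In `NSym`, for every `n ≥ 3`:
`∑_{I ⊨ n, i₁ ≥ 2} i₁(i₂−1)⋯(i_l−1) Λ^I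
  = (1/2) ∑_{I ∈ 𝒞_n, I starts with (1,2)} 2^{m₁(I)} R_I
  + (3/8) ∑_{I ∈ 𝒞_n, I starts with (1,1)} 2^{m₁(I)} R_I`,
where `𝒞_n` is the set of compositions of `n` all of whose parts are `1` or `2` and
whose last part is `1`, and `m₁(I)` is the number of parts of `I` equal to `1`. -/
theorem sum_coeff_lam_first_ge_two_eq (n : ℕ) (hn : 3 ≤ n) :
    ∑ I ∈ Finset.univ.filter (fun I : Composition n => 2 ≤ I.blocks.headI),
        ((I.blocks.headI * ((I.blocks.tail).map (fun i => i - 1)).prod : ℕ) : ℚ) • LamProd I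
      = (1 / 2 : ℚ) • ∑ I ∈ Finset.univ.filter
            (fun I : Composition n =>
              ((∀ i ∈ I.blocks, i = 1 ∨ i = 2) ∧ I.blocks.getLast? = some 1) ∧
                I.blocks.take 2 = [1, 2]),
          ((2 : ℚ) ^ (I.blocks.count 1)) • Rib I
        + (3 / 8 : ℚ) • ∑ I ∈ Finset.univ.filter
            (fun I : Composition n =>
              ((∀ i ∈ I.blocks, i = 1 ∨ i = 2) ∧ I.blocks.getLast? = some 1) ∧
                I.blocks.take 2 = [1, 1]),
          ((2 : ℚ) ^ (I.blocks.count 1)) • Rib I := by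
  have h1 : 1 ≤ n := by omega
  rw [part_eq h1 (1/2 : ℚ) 2, part_eq h1 (3/8 : ℚ) 1, ← Finset.sum_add_distrib]
  rw [Finset.sum_filter]
  have hLam : ∀ I : Composition n, LamProd I = lamP I.blocks := fun _ => rfl
  simp only [hLam]
  rw [sum_composition n (f := fun L => if 2 ≤ L.headI
    then ((L.headI * ((L.tail).map (fun i => i - 1)).prod : ℕ) : ℚ) • lamP L else 0)]
  refine Finset.sum_congr rfl (fun L hL => ?_)
  rw [← add_smul]
  have hkey := keyF hn hL
  have hsq : ((-1:ℚ)^(L.length + 1)) * ((-1:ℚ)^(L.length + 1)) = 1 := by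
    rw [← pow_add]
    exact Even.neg_one_pow (Even.add_self _)
  have hcomb : (1/2 : ℚ) * ((-1:ℚ)^(L.length + 1)) *
        (∑ M ∈ comps n, if (okC M ∧ M.take 2 = [1, 2]) ∧ Disj M L then vw M else 0)
      + (3/8 : ℚ) * ((-1:ℚ)^(L.length + 1)) *
        (∑ M ∈ comps n, if (okC M ∧ M.take 2 = [1, 1]) ∧ Disj M L then vw M else 0)
      = (if 2 ≤ L.headI then ((L.headI * ((L.tail).map (fun i => i - 1)).prod : ℕ) : ℚ)
          else 0) := by
    calc (1/2 : ℚ) * ((-1:ℚ)^(L.length + 1)) *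
        (∑ M ∈ comps n, if (okC M ∧ M.take 2 = [1, 2]) ∧ Disj M L then vw M else 0)
      + (3/8 : ℚ) * ((-1:ℚ)^(L.length + 1)) *
        (∑ M ∈ comps n, if (okC M ∧ M.take 2 = [1, 1]) ∧ Disj M L then vw M else 0)
        = ((-1:ℚ)^(L.length + 1)) * ((1/2 : ℚ) *
            (∑ M ∈ comps n, if (okC M ∧ M.take 2 = [1,2]) ∧ Disj M L then vw M else 0)
          + (3/8 : ℚ) *
            (∑ M ∈ comps n, if (okC M ∧ M.take 2 = [1,1]) ∧ Disj M L then vw M else 0)) := by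
          ring
      _ = ((-1:ℚ)^(L.length + 1)) * (((-1:ℚ)^(L.length + 1)) *
            (if 2 ≤ L.headI then ((L.headI * ((L.tail).map (fun i => i - 1)).prod : ℕ) : ℚ)
              else 0)) := by rw [hkey]
      _ = _ := by rw [← mul_assoc, hsq, one_mul]
  rw [hcomb]
  by_cases hh : 2 ≤ L.headI
  · rw [if_pos hh, if_pos hh]
  · rw [if_neg hh, if_neg hh, zero_smul]

end
end
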